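/- Let Ω be an open, bounded, convex subset of ℝ² with 0 ∈ Ω and Ω ⊆ closedBall 0 D for some D > 0, let g = gauge Ω, let ā > 0, and set φ = ā · g². If φ is differentiable at a point v ≠ 0, then ⟪∇φ(v), v⟫ = 2 φ(v) and ‖∇φ(v)‖ ≥ 2 ā ‖v‖ / D². -/

import Mathlib

open RealInnerProductSpace Metric

theorem gauge_sq_weight_gradient_bound
    (Ω : Set (EuclideanSpace ℝ (Fin 2)))
    (hΩo : IsOpen Ω) (hΩb : Bornology.IsBounded Ω) (hΩc : Convex ℝ Ω)
    (h0 : (0 : EuclideanSpace ℝ (Fin 2)) ∈ Ω)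
    (D : ℝ) (hD : 0 < D) (hΩD : Ω ⊆ closedBall 0 D)
    (abar : ℝ) (habar : 0 < abar)
    (v : EuclideanSpace ℝ (Fin 2)) (hv : v ≠ 0)
    (hdiff : DifferentiableAt ℝ (fun z => abar * gauge Ω z ^ 2) v) :
    ⟪gradient (fun z => abar * gauge Ω z ^ 2) v, v⟫ = 2 * (abar * gauge Ω v ^ 2) ∧
    2 * abar * ‖v‖ / D ^ 2 ≤ ‖gradient (fun z => abar * gauge Ω z ^ 2) v‖ := by
  set f : EuclideanSpace ℝ (Fin 2) → ℝ := fun z => abar * gauge Ω z ^ 2 with hf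
  -- derivative of t ↦ f (t • v) at t = 1
  have hcomp : HasDerivAt (fun t : ℝ => f (t • v)) (fderiv ℝ f v v) 1 := by
    have h1 : HasDerivAt (fun t : ℝ => t • v) ((1 : ℝ) • v) 1 :=
      (hasDerivAt_id (1 : ℝ)).smul_const v
    rw [one_smul] at h1
    have hd : HasFDerivAt f (fderiv ℝ f v) ((1:ℝ) • v) := by
      simpa using hdiff.hasFDerivAt
    exact hd.comp_hasDerivAt (x := (1 : ℝ)) h1
  -- near 1, f (t • v) = (abar * gauge Ω v ^ 2) * t ^ 2
  have heq : (fun t : ℝ => f (t • v)) =ᶠ[nhds (1 : ℝ)]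
      fun t : ℝ => (abar * gauge Ω v ^ 2) * t ^ 2 := by
    filter_upwards [eventually_gt_nhds (show (0:ℝ) < 1 by norm_num)] with t ht
    simp only [hf, gauge_smul_of_nonneg ht.le, smul_eq_mul]
    ring
  have hcomp2 : HasDerivAt (fun t : ℝ => (abar * gauge Ω v ^ 2) * t ^ 2)
      (fderiv ℝ f v v) 1 := hcomp.congr_of_eventuallyEq heq.symm
  have hstd : HasDerivAt (fun t : ℝ => (abar * gauge Ω v ^ 2) * t ^ 2)
      ((abar * gauge Ω v ^ 2) * (2 * 1)) 1 := by
    simpa using ((hasDerivAt_pow 2 (1:ℝ)).const_mul (abar * gauge Ω v ^ 2))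
  have heuler : fderiv ℝ f v v = 2 * (abar * gauge Ω v ^ 2) := by
    have := hcomp2.unique hstd
    linarith
  have hgrad : ⟪gradient f v, v⟫ = fderiv ℝ f v v := by
    rw [gradient, InnerProductSpace.toDual_symm_apply]
  have hmain : ⟪gradient f v, v⟫ = 2 * (abar * gauge Ω v ^ 2) := by
    rw [hgrad, heuler]
  refine ⟨hmain, ?_⟩
  -- lower bound on gauge : ‖v‖ / D ≤ gauge Ω v
  have habs : Absorbent ℝ Ω := absorbent_nhds_zero (hΩo.mem_nhds h0)
  have hgauge_lb : ‖v‖ / D ≤ gauge Ω v := by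
    have := gauge_mono habs hΩD v
    rwa [gauge_closedBall hD.le] at this
  have hvpos : (0:ℝ) < ‖v‖ := norm_pos_iff.mpr hv
  -- Cauchy-Schwarz
  have hcs : ⟪gradient f v, v⟫ ≤ ‖gradient f v‖ * ‖v‖ := real_inner_le_norm _ _
  have h2 : 2 * (abar * gauge Ω v ^ 2) ≤ ‖gradient f v‖ * ‖v‖ := by
    rw [← hmain]; exact hcs
  have hsq : (‖v‖ / D) ^ 2 ≤ gauge Ω v ^ 2 := by
    apply pow_le_pow_left₀ (by positivity) hgauge_lb
  have : 2 * (abar * (‖v‖ / D) ^ 2) ≤ ‖gradient f v‖ * ‖v‖ := by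
    refine le_trans ?_ h2
    nlinarith
  rw [div_le_iff₀ (by positivity)]
  calc 2 * abar * ‖v‖ = (2 * (abar * (‖v‖ / D) ^ 2)) * D ^ 2 / ‖v‖ := by
        field_simp
    _ ≤ (‖gradient f v‖ * ‖v‖) * D ^ 2 / ‖v‖ := by
        apply div_le_div_of_nonneg_right ?_ hvpos.le
        · exact mul_le_mul_of_nonneg_right this (by positivity)
    _ = ‖gradient f v‖ * D ^ 2 := by field_simp
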